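/- Let n > 3 be an integer and let b ∈ {2, −2}. Then the n×n Toeplitz matrix Tₙ = T̃ₙ(b, b) (tridiagonal with diagonal b and off-diagonal −1) is invertible, its inverse is symmetric, and for all indices 1 ≤ j ≤ i ≤ n, the (i,j)-entry of Tₙ⁻¹ equals (2/b)^(i+1−j) · j·(n+1−i)/(n+1). -/

import Mathlib

open Matrix BigOperators Finset

/-- The symmetric tridiagonal near-Toeplitz matrix with corner diagonal entries `bt`,
interior diagonal entries `b`, and off-diagonal entries `-1` (0-based indices). -/
noncomputable def Ttilde (n : ℕ) (b bt : ℝ) : Matrix (Fin n) (Fin n) ℝ :=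
  Matrix.of fun i j =>
    if (i : ℕ) = (j : ℕ) then (if (i : ℕ) = 0 ∨ (i : ℕ) = n - 1 then bt else b)
    else if (i : ℕ) + 1 = (j : ℕ) ∨ (j : ℕ) + 1 = (i : ℕ) then (-1 : ℝ) else 0

/-- The maximum absolute row sum (operator norm induced by the sup norm). -/
noncomputable def normInf {n : ℕ} (A : Matrix (Fin n) (Fin n) ℝ) : ℝ :=
  ⨆ i : Fin n, ∑ j : Fin n, |A i j|

/-- Candidate inverse entry. -/
noncomputable def gfun (c : ℝ) (n : ℕ) (i j : ℕ) : ℝ :=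
  c ^ (i + j + 1) *
    (((min i j : ℕ) : ℝ) + 1) * ((n : ℝ) - ((max i j : ℕ) : ℝ)) / ((n : ℝ) + 1)

lemma sum_prefix' (n k : ℕ) (a : ℕ → ℝ) (hk : k ≤ n) (h : ∀ j, k ≤ j → a j = 0) :
    ∑ j ∈ Finset.range n, a j = ∑ j ∈ Finset.range k, a j := by
  refine (Finset.sum_subset (Finset.range_subset_range.2 hk) ?_).symm
  intro j _ hj
  exact h j (by simpa using hj)

theorem stmt0 (n : ℕ) (hn : 3 < n) (b : ℝ) (hb : b = 2 ∨ b = -2) :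
    IsUnit (Ttilde n b b) ∧
    ((Ttilde n b b)⁻¹)ᵀ = (Ttilde n b b)⁻¹ ∧
    ∀ i j : Fin n, (j : ℕ) ≤ (i : ℕ) →
      (Ttilde n b b)⁻¹ i j =
        (2 / b) ^ ((i : ℕ) + 1 - (j : ℕ)) *
          ((((j : ℕ) : ℝ) + 1) * ((n : ℝ) - ((i : ℕ) : ℝ)) / ((n : ℝ) + 1)) := by
  obtain ⟨q, rfl⟩ : ∃ q, n = q + 4 := ⟨n - 4, by omega⟩
  clear hn
  obtain ⟨c, hcc⟩ : ∃ c : ℝ, 2 / b = c := ⟨2 / b, rfl⟩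
  rw [hcc]
  have hc2 : c ^ 2 = 1 := by rcases hb with rfl | rfl <;> rw [← hcc] <;> norm_num
  have hbc : b = 2 * c := by rcases hb with rfl | rfl <;> rw [← hcc] <;> norm_num
  have hmod : ∀ e : ℕ, c ^ e = c ^ (e % 2) := by
    intro e
    conv_lhs => rw [← Nat.div_add_mod e 2]
    rw [pow_add, pow_mul, hc2, one_pow, one_mul]
  have hn1 : (((q + 4 : ℕ) : ℝ) + 1) ≠ 0 := by positivity
  have key : Ttilde (q + 4) b b *
      (Matrix.of fun i j : Fin (q + 4) => gfun c (q + 4) (i : ℕ) (j : ℕ)) = 1 := by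
    ext i k
    rw [Matrix.mul_apply, Matrix.one_apply]
    have hstep : (∑ j : Fin (q + 4), Ttilde (q + 4) b b i j *
          (Matrix.of fun i j : Fin (q + 4) => gfun c (q + 4) (i : ℕ) (j : ℕ)) j k)
        = ∑ j ∈ Finset.range (q + 4), (fun j : ℕ =>
            (if (i : ℕ) = j then (if (i : ℕ) = 0 ∨ (i : ℕ) = (q + 4) - 1 then b else b)
             else if (i : ℕ) + 1 = j ∨ j + 1 = (i : ℕ) then (-1 : ℝ) else 0)
              * gfun c (q + 4) j (k : ℕ)) j := by
      rw [← Fin.sum_univ_eq_sum_range]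
      rfl
    rw [hstep]
    simp only
    have hi : (i : ℕ) < q + 4 := i.isLt
    have hk : (k : ℕ) < q + 4 := k.isLt
    simp only [Fin.ext_iff]
    by_cases hi0 : (i : ℕ) = 0
    · -- first row
      have hvan : ∀ j, 2 ≤ j →
          (if (i : ℕ) = j then (if (i : ℕ) = 0 ∨ (i : ℕ) = (q + 4) - 1 then b else b)
           else if (i : ℕ) + 1 = j ∨ j + 1 = (i : ℕ) then (-1 : ℝ) else 0)
            * gfun c (q + 4) j (k : ℕ) = 0 := by
        intro j hj
        rw [if_neg (by omega), if_neg (by omega), zero_mul]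
      rw [sum_prefix' (q + 4) 2 _ (by omega) hvan]
      rw [show Finset.range 2 = Finset.range (0 + 1 + 1) from rfl]
      rw [Finset.sum_range_succ, Finset.sum_range_succ, Finset.sum_range_zero, zero_add]
      rw [if_pos hi0, ite_self, if_neg (by omega), if_pos (by omega)]
      rw [hi0]
      by_cases hk0 : (k : ℕ) = 0
      · rw [hk0, if_pos rfl]
        simp only [gfun]
        norm_num
        rw [hbc]
        push_cast
        field_simp
        linear_combination ((q : ℝ) + 5) * hc2
      · rw [if_neg (by omega)]
        simp only [gfun]
        rw [show min 0 (k : ℕ) = 0 from by omega, show max 0 (k : ℕ) = (k : ℕ) from by omega,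
          show min 1 (k : ℕ) = 1 from by omega, show max 1 (k : ℕ) = (k : ℕ) from by omega]
        rw [hbc]
        push_cast
        ring
    · by_cases hil : (i : ℕ) = q + 3
      · -- last row
        have hzero : ∑ j ∈ Finset.range (q + 2),
            (if (i : ℕ) = j then (if (i : ℕ) = 0 ∨ (i : ℕ) = (q + 4) - 1 then b else b)
             else if (i : ℕ) + 1 = j ∨ j + 1 = (i : ℕ) then (-1 : ℝ) else 0)
              * gfun c (q + 4) j (k : ℕ) = 0 := by
          apply Finset.sum_eq_zero
          intro j hj
          simp only [Finset.mem_range] at hj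
          rw [if_neg (by omega), if_neg (by omega), zero_mul]
        rw [show Finset.range (q + 4) = Finset.range ((q + 2) + 1 + 1) from rfl]
        rw [Finset.sum_range_succ, Finset.sum_range_succ, hzero, zero_add]
        rw [if_neg (by omega), if_pos (by omega), if_pos hil, ite_self]
        rw [hil]
        by_cases hkl : (k : ℕ) = q + 3
        · rw [hkl, if_pos rfl]
          simp only [gfun]
          rw [show min (q + 2) (q + 3) = q + 2 from by omega,
            show max (q + 2) (q + 3) = q + 3 from by omega,
            show min (q + 3) (q + 3) = q + 3 from by omega,
            show max (q + 3) (q + 3) = q + 3 from by omega,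
            hmod (q + 2 + (q + 3) + 1), hmod (q + 3 + (q + 3) + 1),
            show (q + 2 + (q + 3) + 1) % 2 = 0 from by omega,
            show (q + 3 + (q + 3) + 1) % 2 = 1 from by omega, pow_zero, pow_one]
          rw [hbc]
          push_cast
          field_simp
          linear_combination (2 * ((q : ℝ) + 4)) * hc2
        · rw [if_neg (by omega)]
          simp only [gfun]
          rw [show min (q + 2) (k : ℕ) = (k : ℕ) from by omega,
            show max (q + 2) (k : ℕ) = q + 2 from by omega,
            show min (q + 3) (k : ℕ) = (k : ℕ) from by omega,
            show max (q + 3) (k : ℕ) = q + 3 from by omega]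
          rw [hbc]
          push_cast
          field_simp
          linear_combination (2 * (((k : ℕ) : ℝ) + 1) * c ^ (q + 2 + ((k : ℕ)) + 1)) * hc2
      · -- interior row
        obtain ⟨m, hm⟩ : ∃ m, (i : ℕ) = m + 1 := ⟨(i : ℕ) - 1, by omega⟩
        have hm2 : m + 1 ≤ q + 2 := by omega
        have hvan : ∀ j, m + 3 ≤ j →
            (if (i : ℕ) = j then (if (i : ℕ) = 0 ∨ (i : ℕ) = (q + 4) - 1 then b else b)
             else if (i : ℕ) + 1 = j ∨ j + 1 = (i : ℕ) then (-1 : ℝ) else 0)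
              * gfun c (q + 4) j (k : ℕ) = 0 := by
          intro j hj
          rw [if_neg (by omega), if_neg (by omega), zero_mul]
        have hzero : ∑ j ∈ Finset.range m,
            (if (i : ℕ) = j then (if (i : ℕ) = 0 ∨ (i : ℕ) = (q + 4) - 1 then b else b)
             else if (i : ℕ) + 1 = j ∨ j + 1 = (i : ℕ) then (-1 : ℝ) else 0)
              * gfun c (q + 4) j (k : ℕ) = 0 := by
          apply Finset.sum_eq_zero
          intro j hj
          simp only [Finset.mem_range] at hj
          rw [if_neg (by omega), if_neg (by omega), zero_mul]
        rw [sum_prefix' (q + 4) (m + 3) _ (by omega) hvan]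
        rw [show Finset.range (m + 3) = Finset.range (m + 1 + 1 + 1) from rfl]
        rw [Finset.sum_range_succ, Finset.sum_range_succ, Finset.sum_range_succ, hzero, zero_add]
        rw [if_neg (by omega), if_pos (by omega),
          if_pos hm, ite_self,
          if_neg (by omega), if_pos (by omega)]
        rw [hm]
        rcases lt_trichotomy (k : ℕ) (m + 1) with hkm | hkm | hkm
        · rw [if_neg (by omega)]
          simp only [gfun]
          rw [show min m (k : ℕ) = (k : ℕ) from by omega,
            show max m (k : ℕ) = m from by omega,
            show min (m + 1) (k : ℕ) = (k : ℕ) from by omega,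
            show max (m + 1) (k : ℕ) = m + 1 from by omega,
            show min (m + 2) (k : ℕ) = (k : ℕ) from by omega,
            show max (m + 2) (k : ℕ) = m + 2 from by omega]
          rw [hbc]
          push_cast
          field_simp
          linear_combination ((((k : ℕ) : ℝ) + 1) * ((q : ℝ) + 4 - (m : ℝ)) *
            c ^ (m + (k : ℕ) + 1)) * hc2
        · rw [if_pos (by omega)]
          simp only [gfun]
          rw [show min m (k : ℕ) = m from by omega,
            show max m (k : ℕ) = m + 1 from by omega,
            show min (m + 1) (k : ℕ) = m + 1 from by omega,
            show max (m + 1) (k : ℕ) = m + 1 from by omega,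
            show min (m + 2) (k : ℕ) = m + 1 from by omega,
            show max (m + 2) (k : ℕ) = m + 2 from by omega]
          rw [hkm]
          rw [hmod (m + (m + 1) + 1), hmod (m + 1 + (m + 1) + 1), hmod (m + 2 + (m + 1) + 1),
            show (m + (m + 1) + 1) % 2 = 0 from by omega,
            show (m + 1 + (m + 1) + 1) % 2 = 1 from by omega,
            show (m + 2 + (m + 1) + 1) % 2 = 0 from by omega, pow_zero, pow_one]
          rw [hbc]
          push_cast
          field_simp
          linear_combination (2 * ((m : ℝ) + 2) * ((q : ℝ) + 3 - (m : ℝ))) * hc2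
        · rw [if_neg (by omega)]
          simp only [gfun]
          rw [show min m (k : ℕ) = m from by omega,
            show max m (k : ℕ) = (k : ℕ) from by omega,
            show min (m + 1) (k : ℕ) = m + 1 from by omega,
            show max (m + 1) (k : ℕ) = (k : ℕ) from by omega,
            show min (m + 2) (k : ℕ) = m + 2 from by omega,
            show max (m + 2) (k : ℕ) = (k : ℕ) from by omega]
          rw [hbc]
          push_cast
          field_simp
          linear_combination (((m : ℝ) + 1) * ((q : ℝ) + 4 - ((k : ℕ) : ℝ)) *
            c ^ (m + (k : ℕ) + 1)) * hc2
  have hInv : (Ttilde (q + 4) b b)⁻¹ =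
      (Matrix.of fun i j : Fin (q + 4) => gfun c (q + 4) (i : ℕ) (j : ℕ)) :=
    Matrix.inv_eq_right_inv key
  refine ⟨(Matrix.isUnit_iff_isUnit_det _).2 (Matrix.isUnit_det_of_right_inverse key), ?_, ?_⟩
  · rw [hInv]
    ext i j
    show gfun c (q + 4) (j : ℕ) (i : ℕ) = gfun c (q + 4) (i : ℕ) (j : ℕ)
    rw [gfun, gfun, Nat.add_comm (j : ℕ) (i : ℕ), min_comm, max_comm]
  · intro i j hji
    rw [hInv]
    show gfun c (q + 4) (i : ℕ) (j : ℕ) = _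
    rw [gfun]
    rw [show min (i : ℕ) (j : ℕ) = (j : ℕ) from by omega,
      show max (i : ℕ) (j : ℕ) = (i : ℕ) from by omega,
      hmod ((i : ℕ) + (j : ℕ) + 1), hmod ((i : ℕ) + 1 - (j : ℕ)),
      show ((i : ℕ) + (j : ℕ) + 1) % 2 = ((i : ℕ) + 1 - (j : ℕ)) % 2 from by omega]
    ring
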